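/- Let V and W be complex vector spaces, let u ∈ V and v ∈ W be nonzero vectors, and let (A i : V →ₗ[ℂ] V) and (B i : W →ₗ[ℂ] W) be families of linear maps indexed by i ∈ ι such that (TensorProduct.map (A i) (B i))(u ⊗ₜ v) = u ⊗ₜ v for every i. If there exist indices i ≠ j with A i ∘ A j + A j ∘ A i = 0, then we obtain a contradiction (False): no such nonzero product vector can be fixed by all the operators. -/
import Mathlib


open scoped TensorProduct

/-- no nonzero product vector can be fixed by a family of product operators
`A i ⊗ B i` two of whose first factors anticommute. -/
theorem no_product_vector_fixed_by_anticommuting_family {ι : Type*} {V W : Type*}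
    [AddCommGroup V] [Module ℂ V] [AddCommGroup W] [Module ℂ W]
    (u : V) (v : W) (hu : u ≠ 0) (hv : v ≠ 0)
    (A : ι → (V →ₗ[ℂ] V)) (B : ι → (W →ₗ[ℂ] W))
    (hfix : ∀ i, TensorProduct.map (A i) (B i) (u ⊗ₜ[ℂ] v) = u ⊗ₜ[ℂ] v)
    (hanti : ∃ i j, i ≠ j ∧ A i ∘ₗ A j + A j ∘ₗ A i = 0) :
    False := by
  -- get a dual functional f on W with f v = 1
  have hdual : ∃ f : W →ₗ[ℂ] ℂ, f v = 1 := by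
    have h := (Module.forall_dual_apply_eq_zero_iff ℂ v).not.mpr hv
    push_neg at h
    obtain ⟨g, hg⟩ := h
    exact ⟨(g v)⁻¹ • g, by simp [inv_mul_cancel₀ hg]⟩
  obtain ⟨f, hf⟩ := hdual
  -- φ (x ⊗ y) = f y • x
  let φ : V ⊗[ℂ] W →ₗ[ℂ] V :=
    TensorProduct.lift (((LinearMap.lsmul ℂ V).comp f).flip)
  have hφ : ∀ (x : V) (y : W), φ (x ⊗ₜ[ℂ] y) = f y • x := fun x y => rfl
  -- each A i scales u
  have key : ∀ i, ∃ c : ℂ, c ≠ 0 ∧ A i u = c • u := by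
    intro i
    have h := congrArg φ (hfix i)
    rw [TensorProduct.map_tmul] at h
    rw [hφ, hφ, hf, one_smul] at h
    have hc : f (B i v) ≠ 0 := by
      intro h0
      rw [h0, zero_smul] at h
      exact hu h.symm
    refine ⟨(f (B i v))⁻¹, inv_ne_zero hc, ?_⟩
    conv_rhs => rw [← h, smul_smul, inv_mul_cancel₀ hc, one_smul]
  obtain ⟨i, j, _, h0⟩ := hanti
  obtain ⟨ci, hci, hAi⟩ := key i
  obtain ⟨cj, hcj, hAj⟩ := key j
  have := congrArg (fun T : V →ₗ[ℂ] V => T u) h0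
  simp only [LinearMap.add_apply, LinearMap.comp_apply, LinearMap.zero_apply,
    hAi, hAj, map_smul] at this
  rw [smul_smul, smul_smul, ← add_smul] at this
  have : cj * ci + ci * cj = 0 := by
    by_contra hne
    exact hu (by simpa [hne] using (smul_eq_zero.mp this).resolve_left hne)
  have : (2 : ℂ) * (ci * cj) = 0 := by ring_nf; linear_combination this
  simp [mul_eq_zero, hci, hcj] at this
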